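/- Let V be a p-adic Banach space, a(z), b(z) p-adic fields on V, 𝟏 ∈ V, and suppose b(z) is creative with respect to 𝟏 (b(n)𝟏 = 0 for n ≥ 0, b(-1)𝟏 = b) and a(z) is creative with respect to 𝟏. Then for every t ∈ ℤ the residue product a(z)_t b(z) is creative with respect to 𝟏 and creates the state a(t)b, i.e. (a(z)_t b(z))(n)𝟏 = 0 for n ≥ 0 and (a(z)_t b(z))(-1)𝟏 = a(t)b. -/
import Mathlib


open Filter

variable {p : ℕ} [Fact p.Prime] {V : Type*} [NormedAddCommGroup V] [NormedSpace ℚ_[p] V]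

/-- A `p`-adic field on a `p`-adic Banach space `V`, given by its modes
`A n : V →L[ℚ_[p]] V`: the modes are uniformly bounded, and `A n b → 0` as `n → ∞`
for every `b ∈ V`. -/
def IsPadicField (A : ℤ → V →L[ℚ_[p]] V) : Prop :=
  (∃ M : ℝ, 0 ≤ M ∧ ∀ (n : ℤ) (b : V), ‖A n b‖ ≤ M * ‖b‖) ∧
    ∀ b : V, Tendsto (fun n : ℤ => A n b) atTop (nhds 0)

/-- If the `p`-adic fields `a(z)` and `b(z)` are creative with respect to `𝟏`
(creating the states `a` and `b` respectively), then for every `t ∈ ℤ` the residue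
product `a(z)ₜ b(z)` is creative with respect to `𝟏` and creates the state `a(t)b`:
its `n`-th mode kills `𝟏` for `n ≥ 0` and its `(-1)`-st mode applied to `𝟏` is `a(t)b`. -/
theorem residue_product_creative
    [CompleteSpace V] [IsUltrametricDist V]
    (A B : ℤ → V →L[ℚ_[p]] V) (hA : IsPadicField A) (hB : IsPadicField B)
    (one a b : V)
    (hAcreate : (∀ n : ℤ, 0 ≤ n → A n one = 0) ∧ A (-1) one = a)
    (hBcreate : (∀ n : ℤ, 0 ≤ n → B n one = 0) ∧ B (-1) one = b)
    (t : ℤ) :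
    (∀ n : ℤ, 0 ≤ n →
      (∑' i : ℕ, ((-1) ^ i * Ring.choose t i : ℤ) •
        (A (t - i) (B (n + i) one)
          - (((-1 : ℤˣ) ^ t : ℤˣ) : ℤ) • B (t + n - i) (A i one))) = 0) ∧
    (∑' i : ℕ, ((-1) ^ i * Ring.choose t i : ℤ) •
        (A (t - i) (B (-1 + i) one)
          - (((-1 : ℤˣ) ^ t : ℤˣ) : ℤ) • B (t + -1 - i) (A i one))) = A t b := by
  constructor
  · intro n hn
    have : ∀ i : ℕ, ((-1) ^ i * Ring.choose t i : ℤ) •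
        (A (t - i) (B (n + i) one)
          - (((-1 : ℤˣ) ^ t : ℤˣ) : ℤ) • B (t + n - i) (A i one)) = 0 := by
      intro i
      rw [hBcreate.1 (n + i) (by positivity), hAcreate.1 i (by positivity)]
      simp
    simp [this]
  · rw [tsum_eq_single 0]
    · norm_num
      rw [hAcreate.1 0 le_rfl, hBcreate.2]
      simp
    · intro i hi
      have hi1 : (1 : ℤ) ≤ (i : ℤ) := by exact_mod_cast Nat.one_le_iff_ne_zero.2 hi
      rw [hBcreate.1 (-1 + i) (by omega), hAcreate.1 i (by positivity)]
      simp
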